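/- Holomorphy under shifted coincidence: if x₂ = x₁ - c, then the function x₁ ↦ K_n(x₁, x₁-c, x₃,...,xₙ | y₁,...,yₙ) has removable singularities at the points x₁ = y_k for k = 1,...,n; i.e., the apparent poles of the determinant entries t(x₁,y_k), t(x₂,y_k) at x₁ = y_k are cancelled by the zeros of the prefactor h(x₂, y_k) = g(x₁, y_k)⁻¹. -/

import Mathlib

open Finset Filter Topology

noncomputable def gf (c x y : ℂ) : ℂ := c / (x - y)
noncomputable def ff (c x y : ℂ) : ℂ := (x - y + c) / (x - y)
noncomputable def hf (c x y : ℂ) : ℂ := (x - y + c) / c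
noncomputable def tf (c x y : ℂ) : ℂ := c ^ 2 / ((x - y) * (x - y + c))

/-- The Izergin determinant `K_n(x|y) = Δ'_n(x) Δ_n(y) ∏_{j,k} h(x_j,y_k) det[t(x_j,y_k)]`. -/
noncomputable def K (c : ℂ) (n : ℕ) (x y : Fin n → ℂ) : ℂ :=
  (∏ j : Fin n, ∏ k ∈ Finset.univ.filter (fun k => k < j), gf c (x j) (x k)) *
  (∏ j : Fin n, ∏ k ∈ Finset.univ.filter (fun k => j < k), gf c (y j) (y k)) *
  (∏ j : Fin n, ∏ k : Fin n, hf c (x j) (y k)) *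
  Matrix.det (Matrix.of fun j k => tf c (x j) (y k))

private lemma contAt_prod {ι : Type*} (s : Finset ι) (f : ι → ℂ → ℂ) (a : ℂ)
    (h : ∀ i ∈ s, ContinuousAt (fun w => f i w) a) :
    ContinuousAt (fun w => ∏ i ∈ s, f i w) a :=
  tendsto_finset_prod s h

theorem stmt14 (c : ℂ) (hc : c ≠ 0) (m : ℕ) (xr : Fin m → ℂ) (y : Fin (m + 2) → ℂ)
    (hy : Function.Injective y) (hyc : ∀ k l, y k ≠ y l + c)
    (hxr : ∀ j k, xr j ≠ y k ∧ xr j ≠ y k - c)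
    (hxrd : Function.Injective xr)
    (hxrc : ∀ j k, j ≠ k → xr j - xr k ≠ c)
    (k : Fin (m + 2)) :
    ∃ L : ℂ,
      Tendsto (fun w => K c (m + 2) (Fin.cons w (Fin.cons (w - c) xr)) y)
        (𝓝[≠] (y k)) (𝓝 L) := by
  set a : ℂ := y k with ha
  set X : ℂ → Fin (m + 2) → ℂ := fun w => Fin.cons w (Fin.cons (w - c) xr) with hX
  -- the matrix with column k regularized
  set N : ℂ → Matrix (Fin (m + 2)) (Fin (m + 2)) ℂ := fun w =>
    Matrix.of fun j l =>
      if l = k then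
        (Fin.cons (c ^ 2 / (w - y k + c))
          (Fin.cons (c ^ 2 / (w - c - y k)) (fun j' => (w - y k) * tf c (xr j') (y k))) :
          Fin (m + 2) → ℂ) j
      else tf c (X w j) (y l) with hN
  -- the regularized prefactors
  set C' : ℂ → ℂ := fun w =>
    (∏ l ∈ Finset.univ.erase k, hf c (X w 1) (y l)) *
      ∏ j ∈ Finset.univ.erase (1 : Fin (m + 2)), ∏ l : Fin (m + 2), hf c (X w j) (y l) with hC'
  set F : ℂ → ℂ := fun w =>
    (∏ j : Fin (m + 2), ∏ l ∈ Finset.univ.filter (fun l => l < j), gf c (X w j) (X w l)) *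
    (∏ j : Fin (m + 2), ∏ l ∈ Finset.univ.filter (fun l => j < l), gf c (y j) (y l)) *
    C' w * (c⁻¹ * Matrix.det (N w)) with hF
  -- injectivity of X a
  have hXne : ∀ j l : Fin (m + 2), j ≠ l → X a j ≠ X a l := by
    intro j l hjl
    induction j using Fin.cases with
    | zero =>
      induction l using Fin.cases with
      | zero => exact absurd rfl hjl
      | succ i =>
        induction i using Fin.cases with
        | zero =>
          simp only [hX, Fin.cons_zero, Fin.cons_succ]
          intro h
          exact hc (by linear_combination h)
        | succ i' =>
          simp only [hX, Fin.cons_zero, Fin.cons_succ]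
          exact fun h => (hxr i' k).1 h.symm
    | succ i =>
      induction i using Fin.cases with
      | zero =>
        induction l using Fin.cases with
        | zero =>
          simp only [hX, Fin.cons_zero, Fin.cons_succ]
          intro h
          exact hc (by linear_combination -h)
        | succ i2 =>
          induction i2 using Fin.cases with
          | zero => exact absurd rfl hjl
          | succ i' =>
            simp only [hX, Fin.cons_zero, Fin.cons_succ]
            exact fun h => (hxr i' k).2 h.symm
      | succ i' =>
        induction l using Fin.cases with
        | zero =>
          simp only [hX, Fin.cons_zero, Fin.cons_succ]
          exact fun h => (hxr i' k).1 h
        | succ i2 =>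
          induction i2 using Fin.cases with
          | zero =>
            simp only [hX, Fin.cons_zero, Fin.cons_succ]
            exact fun h => (hxr i' k).2 h
          | succ i2' =>
            simp only [hX, Fin.cons_zero, Fin.cons_succ]
            intro h
            exact hjl (by rw [hxrd h])
  -- continuity of the coordinates of X
  have hXc : ∀ j : Fin (m + 2), Continuous fun w => X w j := by
    intro j
    induction j using Fin.cases with
    | zero => simpa [hX, Fin.cons_zero, Fin.cons_succ] using continuous_id'
    | succ i =>
      induction i using Fin.cases with
      | zero => simpa [hX, Fin.cons_zero, Fin.cons_succ] using continuous_sub_right c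
      | succ i' => simpa [hX, Fin.cons_zero, Fin.cons_succ] using continuous_const
  -- Key identity: for w ≠ a, K = F
  have hKF : ∀ w : ℂ, w ≠ a → K c (m + 2) (X w) y = F w := by
    intro w hw
    have hw0 : w - y k ≠ 0 := sub_ne_zero.mpr hw
    -- step 1: det (N w) = (w - y k) * det of the original matrix
    have hdet : Matrix.det (N w) =
        (w - y k) * Matrix.det (Matrix.of fun j l => tf c (X w j) (y l)) := by
      have hcol : N w = (Matrix.of fun j l => tf c (X w j) (y l)).updateCol k
          ((w - y k) • fun i => (Matrix.of fun j l => tf c (X w j) (y l)) i k) := by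
        ext j l
        by_cases hl : l = k
        · simp only [hN, Matrix.of_apply, if_pos hl, Matrix.updateCol_apply,
            Pi.smul_apply, smul_eq_mul]
          induction j using Fin.cases with
          | zero =>
            show c ^ 2 / (w - y k + c) = (w - y k) * tf c w (y k)
            rw [tf]
            by_cases h2 : w - y k + c = 0
            · simp [h2]
            · field_simp
          | succ i =>
            induction i using Fin.cases with
            | zero =>
              show c ^ 2 / (w - c - y k) = (w - y k) * tf c (w - c) (y k)
              rw [tf]
              have : w - c - y k + c = w - y k := by ring
              rw [this]
              by_cases h2 : w - c - y k = 0
              · simp [h2]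
              · field_simp
            | succ i' => rfl
        · simp [hN, Matrix.updateCol_apply, hl]
      rw [hcol, Matrix.det_updateCol_smul, Matrix.updateCol_eq_self]
    -- step 2: extract the vanishing hf factor
    have hP : (∏ j : Fin (m + 2), ∏ l : Fin (m + 2), hf c (X w j) (y l)) =
        hf c (X w 1) (y k) * C' w := by
      rw [← Finset.mul_prod_erase Finset.univ
        (fun j => ∏ l : Fin (m + 2), hf c (X w j) (y l)) (Finset.mem_univ 1)]
      rw [← Finset.mul_prod_erase Finset.univ (fun l => hf c (X w 1) (y l)) (Finset.mem_univ k)]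
      rw [hC']
      ring
    have hhf : hf c (X w 1) (y k) = (w - y k) / c := by
      show ((w - c) - y k + c) / c = (w - y k) / c
      congr 1
      ring
    rw [K, hP, hhf]
    simp only [hF]
    rw [hdet]
    field_simp
  -- Continuity of F at a
  have hFcont : ContinuousAt F a := by
    have hA : ContinuousAt (fun w =>
        ∏ j : Fin (m + 2), ∏ l ∈ Finset.univ.filter (fun l => l < j),
          gf c (X w j) (X w l)) a := by
      apply contAt_prod
      intro j _
      apply contAt_prod
      intro l hl
      have hjl : j ≠ l := by
        rcases Finset.mem_filter.mp hl with ⟨_, h⟩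
        exact (ne_of_gt h)
      simp only [gf]
      exact continuousAt_const.div (((hXc j).sub (hXc l)).continuousAt)
        (sub_ne_zero.mpr (hXne j l hjl))
    have hC'c : ContinuousAt C' a := by
      have h1 : ∀ (j : Fin (m + 2)) (l : Fin (m + 2)),
          ContinuousAt (fun w => hf c (X w j) (y l)) a := by
        intro j l
        simp only [hf]
        exact (((hXc j).sub continuous_const).add continuous_const).continuousAt.div_const c
      exact ((contAt_prod _ _ _ fun l _ => h1 1 l).mul
        (contAt_prod _ _ _ fun j _ => contAt_prod _ _ _ fun l _ => h1 j l))
    have hNc : ContinuousAt (fun w => Matrix.det (N w)) a := by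
      have hNent : ∀ j l : Fin (m + 2), ContinuousAt (fun w => N w j l) a := by
        intro j l
        by_cases hl : l = k
        · simp only [hN, Matrix.of_apply, if_pos hl]
          induction j using Fin.cases with
          | zero =>
            apply continuousAt_const.div
              ((continuous_id.sub continuous_const).add continuous_const).continuousAt
            simp [ha]
            exact hc
          | succ i =>
            induction i using Fin.cases with
            | zero =>
              apply continuousAt_const.div
                (((continuous_id.sub continuous_const).sub continuous_const).continuousAt)
              intro h
              apply hc
              have : a - c - y k = 0 := h
              rw [ha] at this
              linear_combination -this
            | succ i' =>
              exact ((continuous_id.sub continuous_const).continuousAt).mul continuousAt_const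
        · simp only [hN, Matrix.of_apply, if_neg hl]
          have hylk : y l ≠ y k := fun h => hl (hy h)
          simp only [tf]
          apply continuousAt_const.div
            ((((hXc j).sub continuous_const).mul
              (((hXc j).sub continuous_const).add continuous_const)).continuousAt)
          apply mul_ne_zero
          · induction j using Fin.cases with
            | zero =>
              simpa [hX, Fin.cons_zero, Fin.cons_succ, sub_ne_zero, ha] using hylk.symm
            | succ i =>
              induction i using Fin.cases with
              | zero =>
                simp only [hX, Fin.cons_zero, Fin.cons_succ, sub_ne_zero, ha, Pi.sub_apply, Pi.add_apply]
                intro h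
                exact hyc k l (by linear_combination h)
              | succ i' =>
                simpa [hX, Fin.cons_zero, Fin.cons_succ, sub_ne_zero] using (hxr i' l).1
          · induction j using Fin.cases with
            | zero =>
              simp only [hX, Fin.cons_zero, Fin.cons_succ, ha, Pi.sub_apply, Pi.add_apply]
              intro h
              exact hyc l k (by linear_combination -h)
            | succ i =>
              induction i using Fin.cases with
              | zero =>
                simp only [hX, Fin.cons_zero, Fin.cons_succ, ha, Pi.sub_apply, Pi.add_apply]
                intro h
                exact hylk (by linear_combination -h)
              | succ i' =>
                simp only [hX, Fin.cons_zero, Fin.cons_succ, Pi.sub_apply, Pi.add_apply]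
                intro h
                exact (hxr i' l).2 (by linear_combination h)
      have hNm : ContinuousAt N a := continuousAt_pi.2 fun j => continuousAt_pi.2 fun l => hNent j l
      exact ((continuous_id.matrix_det).continuousAt).comp hNm
    exact ((hA.mul continuousAt_const).mul hC'c).mul (continuousAt_const.mul hNc)
  refine ⟨F a, ?_⟩
  have h1 : Tendsto F (𝓝[≠] a) (𝓝 (F a)) := hFcont.tendsto.mono_left nhdsWithin_le_nhds
  apply h1.congr'
  filter_upwards [self_mem_nhdsWithin] with w hw
  exact (hKF w hw).symm
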